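/- Let ξ ∈ Z₁ and let u, w be two F-linearly independent Σ-vectors such that Q(su + tw) ≠ 0 for all (s,t) ∈ 𝔽_q² \ {(0,0)} (the extended Σ-line span_F{u,w} is external to Q₀). Then the number of one-dimensional F-subspaces ⟨v⟩ of F⁴ with v ∈ span_F{u, w} and H(v) = 2ξ·Q(v)^{(q+1)/2} is exactly q+1. -/

import Mathlib

/-- `Q(α,β,γ,δ) = αδ - βγ`, the quadratic form of the hyperbolic quadric. -/
def Qf {F : Type*} [Field F] (v : Fin 4 → F) : F := v 0 * v 3 - v 1 * v 2

/-- `H(α,β,γ,δ) = α^{q+1} - β^{q+1} - γ^{q+1} + δ^{q+1}`, the Hermitian form. -/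
def Hf (q : ℕ) {F : Type*} [Field F] (v : Fin 4 → F) : F :=
  v 0 ^ (q + 1) - v 1 ^ (q + 1) - v 2 ^ (q + 1) + v 3 ^ (q + 1)

/-- `v = (α,β,γ,δ)` is nonsingular if `(αz + δ^q z^q)x + (γz + β^q z^q)x^q ≠ 0`
for all nonzero `x, z`. -/
def Nonsingular (q : ℕ) {F : Type*} [Field F] (v : Fin 4 → F) : Prop :=
  ∀ x z : F, x ≠ 0 → z ≠ 0 →
    (v 0 * z + v 3 ^ q * z ^ q) * x + (v 2 * z + v 1 ^ q * z ^ q) * x ^ q ≠ 0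

/-- `Δ(v) = H(v)² - 4·Q(v)^{q+1}`. -/
def Deltaf (q : ℕ) {F : Type*} [Field F] (v : Fin 4 → F) : F :=
  Hf q v ^ 2 - 4 * Qf v ^ (q + 1)

/-- A Σ-vector: a nonzero vector of the form `(α, β, β^q, α^q)`. -/
def IsSigmaVec (q : ℕ) {F : Type*} [Field F] (v : Fin 4 → F) : Prop :=
  v ≠ 0 ∧ ∃ α β : F, v = ![α, β, β ^ q, α ^ q]

/-- The sesquilinear form `h(u,v) = u₁v₁^q - u₂v₂^q - u₃v₃^q + u₄v₄^q`. -/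
def hForm (q : ℕ) {F : Type*} [Field F] (u v : Fin 4 → F) : F :=
  u 0 * v 0 ^ q - u 1 * v 1 ^ q - u 2 * v 2 ^ q + u 3 * v 3 ^ q

/-- The one-dimensional `F`-subspace (as a set) spanned by `v`. -/
def Fline {F : Type*} [Field F] (v : Fin 4 → F) : Set (Fin 4 → F) :=
  {x | ∃ a : F, x = a • v}

/-- The number of one-dimensional `𝔽_q`-subspaces `⟨(s,t)⟩` of `𝔽_q²` with
`Q(s·u + t·w) = 0`. -/
noncomputable def tangentCount (q : ℕ) {F : Type*} [Field F] (u w : Fin 4 → F) : ℕ :=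
  Set.ncard {L : Set (F × F) | ∃ s t : F, s ^ q = s ∧ t ^ q = t ∧ (s, t) ≠ (0, 0) ∧
    Qf (fun i => s * u i + t * w i) = 0 ∧
    L = {p : F × F | ∃ e : F, e ^ q = e ∧ p = (e * s, e * t)}}

/-- `Z₁`: the set of `ξ ∉ {0, 1, -1}` such that `1 - ξ⁻²` is a nonzero square of `𝔽_q`. -/
def Zone (q : ℕ) (F : Type*) [Field F] : Set F :=
  {ξ | ξ ≠ 0 ∧ ξ ≠ 1 ∧ ξ ≠ -1 ∧ ∃ s : F, s ^ q = s ∧ s ≠ 0 ∧ 1 - (ξ ^ 2)⁻¹ = s ^ 2}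

/-- `Z₂`: the set of `ξ ≠ 0` such that `1 - ξ⁻²` is a nonzero nonsquare of `𝔽_q`. -/
def Ztwo (q : ℕ) (F : Type*) [Field F] : Set F :=
  {ξ | ξ ≠ 0 ∧ (1 - (ξ ^ 2)⁻¹) ^ q = 1 - (ξ ^ 2)⁻¹ ∧ 1 - (ξ ^ 2)⁻¹ ≠ 0 ∧
    ¬∃ s : F, s ^ q = s ∧ 1 - (ξ ^ 2)⁻¹ = s ^ 2}

private lemma aux_exists_root {F : Type*} [Field F] [Fintype F]
    (n m : ℕ) (hcard : Fintype.card F - 1 = n * m) (z : F) (hz : z ≠ 0)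
    (hpow : z ^ m = 1) (hm : 0 < m) : ∃ t₀ : F, t₀ ≠ 0 ∧ t₀ ^ n = z := by
  classical
  obtain ⟨g, hg⟩ := IsCyclic.exists_generator (α := Fˣ)
  have hord : orderOf g = n * m := by
    rw [orderOf_eq_card_of_forall_mem_zpowers hg, Nat.card_eq_fintype_card,
      Fintype.card_units, hcard]
  obtain ⟨i, hi : g ^ i = Units.mk0 z hz⟩ := mem_powers_iff_mem_zpowers.mpr (hg _)
  have hzum : (Units.mk0 z hz) ^ m = 1 := by
    ext
    simp [hpow]
  have hdvd : n * m ∣ i * m := by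
    rw [← hord]
    apply orderOf_dvd_of_pow_eq_one
    rw [pow_mul, hi, hzum]
  obtain ⟨j, hj⟩ := hdvd
  have hij : i = n * j := by
    have hj' : i * m = (n * j) * m := by rw [hj]; ring
    exact Nat.eq_of_mul_eq_mul_right hm hj'
  refine ⟨((g ^ j : Fˣ) : F), Units.ne_zero _, ?_⟩
  rw [← Units.val_pow_eq_pow_val, ← pow_mul, mul_comm j n, ← hij, hi]
  simp

private lemma aux_card_fiber {F : Type*} [Field F] [Fintype F]
    (n : ℕ) (hn : 0 < n) (hdvd : n ∣ Fintype.card F - 1) (z t₀ : F) (ht₀ : t₀ ≠ 0)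
    (h : t₀ ^ n = z) : Set.ncard {t : F | t ^ n = z} = n := by
  classical
  obtain ⟨g, hg⟩ := IsCyclic.exists_generator (α := Fˣ)
  have h1 : 0 < Fintype.card F - 1 := by
    have := Fintype.one_lt_card (α := F); omega
  have hord : orderOf g = Fintype.card F - 1 := by
    rw [orderOf_eq_card_of_forall_mem_zpowers hg, Nat.card_eq_fintype_card,
      Fintype.card_units]
  have hprim : IsPrimitiveRoot ((g : Fˣ) : F) (Fintype.card F - 1) := by
    rw [← hord]
    exact IsPrimitiveRoot.coe_units_iff.mpr (IsPrimitiveRoot.orderOf g)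
  obtain ⟨a, ha⟩ := hdvd
  have hprim2 : IsPrimitiveRoot (((g : Fˣ) : F) ^ a) n :=
    hprim.pow h1 (by rw [ha, mul_comm])
  have hset : {t : F | t ^ n = z} = (fun r => t₀ * r) '' {r : F | r ^ n = 1} := by
    ext r
    simp only [Set.mem_setOf_eq, Set.mem_image]
    constructor
    · intro hr
      refine ⟨t₀⁻¹ * r, ?_, by field_simp⟩
      rw [mul_pow, hr, ← h, inv_pow]
      field_simp
    · rintro ⟨s, hs, rfl⟩
      rw [mul_pow, hs, h, mul_one]
  rw [hset, Set.ncard_image_of_injective _ (mul_right_injective₀ ht₀)]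
  have hset2 : {r : F | r ^ n = 1} = ↑(Polynomial.nthRootsFinset n (1 : F)) := by
    ext r; simp [Polynomial.mem_nthRootsFinset hn]
  rw [hset2, Set.ncard_coe_finset, hprim2.card_nthRootsFinset]

/-- An extended `Σ`-line external to `Q₀` meets the surface `S_ξ`, `ξ ∈ Z₁`, in exactly
`q+1` points. -/
theorem stmt14 (q : ℕ) (hq : ∃ p k : ℕ, p.Prime ∧ 0 < k ∧ q = p ^ k) (hodd : Odd q)
    (F : Type*) [Field F] [Fintype F] (hF : Fintype.card F = q ^ 2)
    (ξ : F) (hξ : ξ ∈ Zone q F)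
    (u w : Fin 4 → F) (hu : IsSigmaVec q u) (hw : IsSigmaVec q w)
    (hind : LinearIndependent F ![u, w])
    (hext : ∀ s t : F, s ^ q = s → t ^ q = t → (s, t) ≠ (0, 0) →
      Qf (fun i => s * u i + t * w i) ≠ 0) :
    Set.ncard {L : Set (Fin 4 → F) | ∃ v : Fin 4 → F, v ≠ 0 ∧
      v ∈ Submodule.span F {u, w} ∧
      Hf q v = 2 * ξ * Qf v ^ ((q + 1) / 2) ∧ L = Fline v} = q + 1 := by
  classical
  obtain ⟨p, k, hp, hk, hqpk⟩ := hq
  obtain ⟨m, hm0⟩ := hodd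
  have hm : q = 2 * m + 1 := by omega
  have hq2 : 2 ≤ q := by
    rw [hqpk]
    calc 2 ≤ p := hp.two_le
    _ ≤ p ^ k := Nat.le_self_pow (by omega) p
  have hm1 : 1 ≤ m := by omega
  -- characteristic
  haveI : CharP F (ringChar F) := ringChar.charP F
  obtain ⟨n', hp', hcard'⟩ := FiniteField.card F (ringChar F)
  have hppr : p = ringChar F := by
    have h1 : p ∣ ringChar F ^ (n' : ℕ) := by
      rw [← hcard', hF, hqpk, ← pow_mul]
      exact dvd_pow_self p (by positivity)
    exact (Nat.prime_dvd_prime_iff_eq hp hp').mp (hp.dvd_of_dvd_pow h1)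
  haveI hcp : CharP F p := by rw [hppr]; exact ringChar.charP F
  haveI : ExpChar F p := ExpChar.prime hp
  have hpodd : p ≠ 2 := by
    rintro rfl
    rw [hqpk] at hm
    have h2k : 2 ∣ 2 ^ k := dvd_pow_self 2 (by omega)
    omega
  have h2 : (2 : F) ≠ 0 := by
    intro h
    have h' : ((2 : ℕ) : F) = 0 := by exact_mod_cast h
    have := (CharP.cast_eq_zero_iff F p 2).mp h'
    exact hpodd ((Nat.prime_dvd_prime_iff_eq hp Nat.prime_two).mp this)
  have hrc2 : ringChar F ≠ 2 := by rw [← hppr]; exact hpodd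
  have h4ne : (4 : F) ≠ 0 := by
    have h44 : (4 : F) = 2 * 2 := by norm_num
    rw [h44]; exact mul_ne_zero h2 h2
  -- Frobenius
  obtain ⟨φ, hφdef⟩ : ∃ φ' : F →+* F, φ' = iterateFrobenius F p k := ⟨_, rfl⟩
  have hφ : ∀ x : F, x ^ q = φ x := by
    intro x; rw [hφdef, iterateFrobenius_def, hqpk]
  have hφ2 : ∀ x : F, φ (φ x) = x := by
    intro x
    rw [← hφ, ← hφ, ← pow_mul, ← pow_two, ← hF]
    exact FiniteField.pow_card x
  have hfix : ∀ x : F, x ≠ 0 → φ x = x → x ^ (2 * m) = 1 := by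
    intro x hx0 hxf
    have hq' : x ^ (2 * m) * x = 1 * x := by
      rw [← pow_succ, show 2 * m + 1 = q by omega, hφ, hxf, one_mul]
    exact mul_right_cancel₀ hx0 hq'
  -- components
  obtain ⟨hu0, α₁, β₁, huE⟩ := hu
  obtain ⟨hw0, α₂, β₂, hwE⟩ := hw
  simp only [hφ] at huE hwE
  obtain ⟨c, hcdef⟩ : ∃ x : F, x = α₁ * φ α₁ - β₁ * φ β₁ := ⟨_, rfl⟩
  obtain ⟨cw, hcwdef⟩ : ∃ x : F, x = α₂ * φ α₂ - β₂ * φ β₂ := ⟨_, rfl⟩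
  obtain ⟨B, hBdef⟩ : ∃ x : F, x = α₁ * φ α₂ + φ α₁ * α₂ - β₁ * φ β₂ - φ β₁ * β₂ := ⟨_, rfl⟩
  have hφc : φ c = c := by rw [hcdef]; simp only [map_sub, map_mul, hφ2]; ring
  have hφcw : φ cw = cw := by rw [hcwdef]; simp only [map_sub, map_mul, hφ2]; ring
  have hφB : φ B = B := by
    rw [hBdef]; simp only [map_sub, map_add, map_mul, hφ2]; ring
  have hfun : ∀ a b : F, (fun i => a * u i + b * w i) = a • u + b • w := by
    intro a b; funext i; simp [Pi.smul_apply, smul_eq_mul]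
  have hQ' : ∀ a b : F, Qf (a • u + b • w) = c * a ^ 2 + B * (a * b) + cw * b ^ 2 := by
    intro a b
    simp only [Qf, Pi.add_apply, Pi.smul_apply, smul_eq_mul, huE, hwE,
      Matrix.cons_val_zero, Matrix.cons_val_one, Matrix.head_cons,
      Matrix.cons_val_two, Matrix.tail_cons, Matrix.cons_val_three]
    rw [hcdef, hBdef, hcwdef]
    ring
  have hH' : ∀ a b : F, Hf q (a • u + b • w) =
      2 * c * (a * φ a) + B * (a * φ b + φ a * b) + 2 * cw * (b * φ b) := by
    intro a b
    simp only [Hf, Pi.add_apply, Pi.smul_apply, smul_eq_mul, huE, hwE,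
      Matrix.cons_val_zero, Matrix.cons_val_one, Matrix.head_cons,
      Matrix.cons_val_two, Matrix.tail_cons, Matrix.cons_val_three]
    rw [pow_succ, pow_succ, pow_succ, pow_succ]
    simp only [hφ, map_add, map_mul, hφ2]
    rw [hcdef, hBdef, hcwdef]
    ring
  have hcne : c ≠ 0 := by
    have h := hext 1 0 (one_pow q) (zero_pow (by omega)) (by simp)
    rw [hfun] at h
    intro hc
    apply h
    rw [hQ' 1 0, hc]
    ring
  -- no square root of the discriminant in GF(q)
  have hD : ∀ e : F, φ e = e → e ^ 2 ≠ B ^ 2 - 4 * c * cw := by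
    intro e he hee
    refine hext (e - B) (2 * c) ?_ ?_ ?_ ?_
    · rw [hφ, map_sub, he, hφB]
    · rw [hφ, map_mul, map_ofNat, hφc]
    · intro hpair
      have h2c : 2 * c = 0 := congrArg Prod.snd hpair
      rcases mul_eq_zero.mp h2c with h' | h'
      exacts [h2 h', hcne h']
    · rw [hfun, hQ']
      linear_combination c * hee
  have hD0 : B ^ 2 - 4 * c * cw ≠ 0 := by
    intro h
    exact hD 0 (map_zero φ) (by rw [h]; norm_num)
  have hφD : φ (B ^ 2 - 4 * c * cw) = B ^ 2 - 4 * c * cw := by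
    simp only [map_sub, map_mul, map_pow, map_ofNat, hφc, hφcw, hφB]
  have hsq : IsSquare (B ^ 2 - 4 * c * cw) := by
    rw [FiniteField.isSquare_iff hrc2 hD0]
    have hc2 : Fintype.card F / 2 = 2 * m * (m + 1) := by
      rw [hF]
      have : q ^ 2 = 2 * m * (m + 1) * 2 + 1 := by rw [hm]; ring
      omega
    rw [hc2, pow_mul, hfix _ hD0 hφD, one_pow]
  obtain ⟨E, hEsq⟩ := hsq
  have hE2 : E ^ 2 = B ^ 2 - 4 * c * cw := by rw [hEsq]; ring
  have hE0 : E ≠ 0 := by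
    intro h
    apply hD0
    rw [← hE2, h]; norm_num
  have hφE : φ E = -E := by
    have hsq' : (φ E) ^ 2 = E ^ 2 := by
      rw [← map_pow, hE2, hφD, ← hE2]
    have hcase : (φ E - E) * (φ E + E) = 0 := by linear_combination hsq'
    rcases mul_eq_zero.mp hcase with h | h
    · exfalso
      exact hD E (by linear_combination h) hE2
    · linear_combination h
  -- Zone facts
  obtain ⟨hξ0, hξ1, hξm1, s, hsqs, hs0, hs2⟩ := hξ
  have hφs : φ s = s := by rw [← hφ]; exact hsqs
  have hξ2 : ξ ^ 2 ≠ 0 := pow_ne_zero _ hξ0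
  have hinv : (ξ ^ 2)⁻¹ = 1 - s ^ 2 := by linear_combination -hs2
  have hφξ2 : φ (ξ ^ 2) = ξ ^ 2 := by
    have h2' : φ ((ξ ^ 2)⁻¹) = (ξ ^ 2)⁻¹ := by
      rw [hinv]; simp only [map_sub, map_one, map_pow, hφs]
    rw [map_inv₀] at h2'
    exact inv_injective h2'
  have hs2' : ξ ^ 2 * (1 - s ^ 2) = 1 := by
    rw [← hinv]; exact mul_inv_cancel₀ hξ2
  -- η
  obtain ⟨η, hηdef⟩ : ∃ x : F, x = c ^ m := ⟨_, rfl⟩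
  have hφη : φ η = η := by rw [hηdef, map_pow, hφc]
  have hη2 : η * η = 1 := by
    have hc2m : c ^ (2 * m) = 1 := hfix c hcne hφc
    rw [hηdef, ← pow_add, show m + m = 2 * m by ring, hc2m]
  have hη0 : η ≠ 0 := left_ne_zero_of_mul_eq_one hη2
  have h2pow : (4 * c) ^ (m + 1) = 4 * c * η := by
    have h4 : (4 : F) ^ (m + 1) = 4 := by
      have e1 : (4 : F) = 2 ^ 2 := by norm_num
      rw [e1, ← pow_mul, show 2 * (m + 1) = q + 1 by omega, pow_succ, hφ, map_ofNat]
      norm_num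
    rw [mul_pow, h4, pow_succ, ← hηdef]
    ring
  have hPow : ∀ x : F, x * φ x = (x ^ (m + 1)) ^ 2 := by
    intro x
    rw [← hφ, ← pow_succ', show q + 1 = (m + 1) * 2 by omega, pow_mul]
  have hQE : ∀ a b : F, 4 * c * Qf (a • u + b • w) =
      (2 * c * a + B * b + E * b) * (2 * c * a + B * b - E * b) := by
    intro a b
    rw [hQ' a b]
    linear_combination (b ^ 2) * hE2
  have hHE : ∀ a b : F, 4 * c * Hf q (a • u + b • w) =
      (2 * c * a + B * b + E * b) * φ (2 * c * a + B * b + E * b)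
      + (2 * c * a + B * b - E * b) * φ (2 * c * a + B * b - E * b) := by
    intro a b
    rw [hH' a b]
    simp only [map_add, map_sub, map_mul, map_ofNat, hφc, hφB, hφE]
    linear_combination (2 * (b * φ b)) * hE2
  have hstep : ∀ a b : F,
      (Hf q (a • u + b • w) = 2 * ξ * Qf (a • u + b • w) ^ (m + 1)) ↔
      (((2 * c * a + B * b + E * b) ^ (m + 1)) ^ 2
        + ((2 * c * a + B * b - E * b) ^ (m + 1)) ^ 2
        = 2 * η * ξ * ((2 * c * a + B * b + E * b) ^ (m + 1)
            * (2 * c * a + B * b - E * b) ^ (m + 1))) := by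
    intro a b
    have hK0 : (4 * c) * (4 * c) ^ (m + 1) ≠ 0 :=
      mul_ne_zero (mul_ne_zero h4ne hcne) (pow_ne_zero _ (mul_ne_zero h4ne hcne))
    have h4cη : 4 * c * η ≠ 0 := mul_ne_zero (mul_ne_zero h4ne hcne) hη0
    have e1 : (4 * c) * (4 * c) ^ (m + 1) * Hf q (a • u + b • w)
        = 4 * c * η * (((2 * c * a + B * b + E * b) ^ (m + 1)) ^ 2
            + ((2 * c * a + B * b - E * b) ^ (m + 1)) ^ 2) := by
      linear_combination (4 * c) ^ (m + 1) * hHE a b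
        + (4 * c) ^ (m + 1) * hPow (2 * c * a + B * b + E * b)
        + (4 * c) ^ (m + 1) * hPow (2 * c * a + B * b - E * b)
        + (((2 * c * a + B * b + E * b) ^ (m + 1)) ^ 2
            + ((2 * c * a + B * b - E * b) ^ (m + 1)) ^ 2) * h2pow
    have h1' : (4 * c) ^ (m + 1) * Qf (a • u + b • w) ^ (m + 1)
        = (2 * c * a + B * b + E * b) ^ (m + 1) * (2 * c * a + B * b - E * b) ^ (m + 1) := by
      rw [← mul_pow, hQE a b, mul_pow]
    have e2 : (4 * c) * (4 * c) ^ (m + 1) * (2 * ξ * Qf (a • u + b • w) ^ (m + 1))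
        = 4 * c * η * (2 * η * ξ * ((2 * c * a + B * b + E * b) ^ (m + 1)
            * (2 * c * a + B * b - E * b) ^ (m + 1))) := by
      linear_combination (8 * c * ξ) * h1'
        - (8 * c * ξ * ((2 * c * a + B * b + E * b) ^ (m + 1)
            * (2 * c * a + B * b - E * b) ^ (m + 1))) * hη2
    constructor
    · intro h
      have h' : 4 * c * η * (((2 * c * a + B * b + E * b) ^ (m + 1)) ^ 2
            + ((2 * c * a + B * b - E * b) ^ (m + 1)) ^ 2)
          = 4 * c * η * (2 * η * ξ * ((2 * c * a + B * b + E * b) ^ (m + 1)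
            * (2 * c * a + B * b - E * b) ^ (m + 1))) := by
        rw [← e1, ← e2, h]
      exact mul_left_cancel₀ h4cη h'
    · intro h
      have h' : (4 * c) * (4 * c) ^ (m + 1) * Hf q (a • u + b • w)
          = (4 * c) * (4 * c) ^ (m + 1) * (2 * ξ * Qf (a • u + b • w) ^ (m + 1)) := by
        rw [e1, e2, h]
      exact mul_left_cancel₀ hK0 h'
  -- linear independence
  have hli : ∀ a b : F, a • u + b • w = 0 → a = 0 ∧ b = 0 := by
    intro a b hab
    have h := Fintype.linearIndependent_iff.mp hind ![a, b] ?_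
    · exact ⟨h 0, h 1⟩
    · rw [Fin.sum_univ_two]
      simpa using hab
  have hcoeff : ∀ a b a' b' : F,
      2 * c * a + B * b + E * b = 2 * c * a' + B * b' + E * b' →
      2 * c * a + B * b - E * b = 2 * c * a' + B * b' - E * b' → a = a' ∧ b = b' := by
    intro a b a' b' hx hy
    have hb : b = b' := by
      have h3 : 2 * E * (b - b') = 0 := by linear_combination hx - hy
      rcases mul_eq_zero.mp h3 with h4 | h4
      · exact absurd h4 (mul_ne_zero h2 hE0)
      · linear_combination h4
    subst hb
    have ha : 2 * c * (a - a') = 0 := by linear_combination hy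
    rcases mul_eq_zero.mp ha with h4 | h4
    · exact absurd h4 (mul_ne_zero h2 hcne)
    · exact ⟨by linear_combination h4, rfl⟩
  have hFl_smul : ∀ (y : F), y ≠ 0 → ∀ v : Fin 4 → F, Fline (y • v) = Fline v := by
    intro y hy v
    ext x
    simp only [Fline, Set.mem_setOf_eq]
    constructor
    · rintro ⟨a, rfl⟩
      exact ⟨a * y, by rw [mul_smul]⟩
    · rintro ⟨a, rfl⟩
      refine ⟨a * y⁻¹, ?_⟩
      rw [mul_smul, inv_smul_smul₀ hy]
  -- the two roots
  have hzprod : (η * ξ * (1 + s)) * (η * ξ * (1 - s)) = 1 := by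
    linear_combination (ξ ^ 2 * (1 - s ^ 2)) * hη2 + hs2'
  have hz1 : η * ξ * (1 + s) ≠ 0 := left_ne_zero_of_mul_eq_one hzprod
  have hz2 : η * ξ * (1 - s) ≠ 0 := right_ne_zero_of_mul_eq_one hzprod
  have hzne : η * ξ * (1 + s) ≠ η * ξ * (1 - s) := by
    intro h
    have h3 : η * (ξ * (2 * s)) = 0 := by linear_combination h
    rcases mul_eq_zero.mp h3 with h4 | h4
    · exact hη0 h4
    rcases mul_eq_zero.mp h4 with h5 | h5
    · exact hξ0 h5
    rcases mul_eq_zero.mp h5 with h6 | h6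
    exacts [h2 h6, hs0 h6]
  -- counting the fibers
  have hcard1 : Fintype.card F - 1 = (m + 1) * (4 * m) := by
    rw [hF]
    have : q ^ 2 = (m + 1) * (4 * m) + 1 := by rw [hm]; ring
    omega
  have hzpow : ∀ z : F, z ≠ 0 → φ (z ^ 2) = z ^ 2 → z ^ (4 * m) = 1 := by
    intro z hz0 hzf
    have h1 : z ^ (4 * m) = (z ^ 2) ^ (2 * m) := by
      rw [← pow_mul]
      congr 1
      ring
    rw [h1]
    exact hfix _ (pow_ne_zero _ hz0) hzf
  have hfib : ∀ z : F, z ≠ 0 → φ (z ^ 2) = z ^ 2 →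
      Set.ncard {t : F | t ^ (m + 1) = z} = m + 1 := by
    intro z hz0 hzf
    obtain ⟨t₀, ht₀, ht₀z⟩ :=
      aux_exists_root (m + 1) (4 * m) hcard1 z hz0 (hzpow z hz0 hzf) (by omega)
    exact aux_card_fiber (m + 1) (by omega) ⟨4 * m, hcard1⟩ z t₀ ht₀ ht₀z
  have hφz1 : φ ((η * ξ * (1 + s)) ^ 2) = (η * ξ * (1 + s)) ^ 2 := by
    have e : (η * ξ * (1 + s)) ^ 2 = (η * η) * (ξ ^ 2) * ((1 + s) ^ 2) := by ring
    rw [e]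
    simp only [map_mul, map_pow, map_add, map_one, hφη, hφξ2, hφs]
  have hφz2 : φ ((η * ξ * (1 - s)) ^ 2) = (η * ξ * (1 - s)) ^ 2 := by
    have e : (η * ξ * (1 - s)) ^ 2 = (η * η) * (ξ ^ 2) * ((1 - s) ^ 2) := by ring
    rw [e]
    simp only [map_mul, map_pow, map_sub, map_one, hφη, hφξ2, hφs]
  -- the parameter set
  obtain ⟨T, hTdef⟩ : ∃ T : Set F, T = {t : F | (t ^ (m + 1)) ^ 2 + 1 = 2 * η * ξ * t ^ (m + 1)} := ⟨_, rfl⟩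
  have hTsplit : T = {t : F | t ^ (m + 1) = η * ξ * (1 + s)}
      ∪ {t : F | t ^ (m + 1) = η * ξ * (1 - s)} := by
    ext t
    simp only [hTdef, Set.mem_setOf_eq, Set.mem_union]
    constructor
    · intro ht
      have h0 : (t ^ (m + 1) - η * ξ * (1 + s)) * (t ^ (m + 1) - η * ξ * (1 - s)) = 0 := by
        linear_combination ht + hzprod
      rcases mul_eq_zero.mp h0 with h4 | h4
      · left; linear_combination h4
      · right; linear_combination h4
    · rintro (h4 | h4)
      · rw [h4]; linear_combination -hzprod
      · rw [h4]; linear_combination -hzprod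
  have hdisj : Disjoint {t : F | t ^ (m + 1) = η * ξ * (1 + s)}
      {t : F | t ^ (m + 1) = η * ξ * (1 - s)} := by
    rw [Set.disjoint_left]
    intro t ht1 ht2
    exact hzne (ht1.symm.trans ht2)
  have hTcard : Set.ncard T = q + 1 := by
    rw [hTsplit, Set.ncard_union_eq hdisj (Set.toFinite _) (Set.toFinite _),
      hfib _ hz1 hφz1, hfib _ hz2 hφz2]
    omega
  -- the parametrization
  obtain ⟨Bf, hBfdef⟩ : ∃ f : F → F, f = fun t => 2 * c * (t - 1) := ⟨_, rfl⟩
  obtain ⟨Af, hAfdef⟩ : ∃ f : F → F, f = fun t => 2 * E - (B - E) * (t - 1) := ⟨_, rfl⟩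
  have h4cE : 4 * c * E ≠ 0 := mul_ne_zero (mul_ne_zero h4ne hcne) hE0
  have hXt : ∀ t : F, 2 * c * Af t + B * Bf t + E * Bf t = 4 * c * E * t := by
    intro t
    simp only [hAfdef, hBfdef]
    ring
  have hYt : ∀ t : F, 2 * c * Af t + B * Bf t - E * Bf t = 4 * c * E := by
    intro t
    simp only [hAfdef, hBfdef]
    ring
  obtain ⟨Φ, hΦdef⟩ : ∃ f : F → Set (Fin 4 → F), f = fun t => Fline (Af t • u + Bf t • w) := ⟨_, rfl⟩
  have hqhalf : (q + 1) / 2 = m + 1 := by omega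
  have hSet : {L : Set (Fin 4 → F) | ∃ v : Fin 4 → F, v ≠ 0 ∧
      v ∈ Submodule.span F {u, w} ∧
      Hf q v = 2 * ξ * Qf v ^ ((q + 1) / 2) ∧ L = Fline v} = Φ '' T := by
    ext L
    simp only [Set.mem_setOf_eq, Set.mem_image]
    constructor
    · rintro ⟨v, hv0, hvsp, hvcond, rfl⟩
      obtain ⟨a, b, hab⟩ := Submodule.mem_span_pair.mp hvsp
      rw [hqhalf] at hvcond
      rw [← hab] at hv0 hvcond ⊢
      have hcXY := (hstep a b).mp hvcond
      have hY0 : 2 * c * a + B * b - E * b ≠ 0 := by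
        intro hY
        apply hv0
        have hX0 : 2 * c * a + B * b + E * b = 0 := by
          rw [hY] at hcXY
          have hz : (0 : F) ^ (m + 1) = 0 := zero_pow (by omega)
          rw [hz] at hcXY
          have h5 : ((2 * c * a + B * b + E * b) ^ (m + 1)) ^ 2 = 0 := by
            linear_combination hcXY
          have h6 := pow_eq_zero_iff (n := 2) (by omega) |>.mp h5
          exact pow_eq_zero_iff (n := m + 1) (by omega) |>.mp h6
        obtain ⟨ha0, hb0⟩ := hcoeff a b 0 0 (by rw [hX0]; ring) (by rw [hY]; ring)
        rw [ha0, hb0]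
        simp
      have hRR : (2 * c * a + B * b - E * b) ^ (m + 1) ≠ 0 := pow_ne_zero _ hY0
      have hXYm : ((2 * c * a + B * b + E * b) / (2 * c * a + B * b - E * b)) ^ (m + 1)
          = (2 * c * a + B * b + E * b) ^ (m + 1)
            * ((2 * c * a + B * b - E * b) ^ (m + 1))⁻¹ := by
        rw [div_pow, div_eq_mul_inv]
      have hYi : ((2 * c * a + B * b - E * b) ^ (m + 1))⁻¹
          * (2 * c * a + B * b - E * b) ^ (m + 1) = 1 := inv_mul_cancel₀ hRR
      have hXY : (2 * c * a + B * b + E * b) / (2 * c * a + B * b - E * b)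
          * (2 * c * a + B * b - E * b) = 2 * c * a + B * b + E * b :=
        div_mul_cancel₀ _ hY0
      refine ⟨(2 * c * a + B * b + E * b) / (2 * c * a + B * b - E * b), ?_, ?_⟩
      · simp only [hTdef, Set.mem_setOf_eq]
        rw [hXYm]
        linear_combination (((2 * c * a + B * b - E * b) ^ (m + 1))⁻¹) ^ 2 * hcXY
          - (1 + ((2 * c * a + B * b - E * b) ^ (m + 1))⁻¹
                * (2 * c * a + B * b - E * b) ^ (m + 1)
              - 2 * η * ξ * (2 * c * a + B * b + E * b) ^ (m + 1)
                * ((2 * c * a + B * b - E * b) ^ (m + 1))⁻¹) * hYi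
      · simp only [hΦdef]
        have hbb : (2 * c * a + B * b - E * b)
            * Bf ((2 * c * a + B * b + E * b) / (2 * c * a + B * b - E * b))
            = 4 * c * E * b := by
          simp only [hBfdef]
          linear_combination (2 * c) * hXY
        have haa : (2 * c * a + B * b - E * b)
            * Af ((2 * c * a + B * b + E * b) / (2 * c * a + B * b - E * b))
            = 4 * c * E * a := by
          simp only [hAfdef, hBfdef]
          linear_combination (-(B - E)) * hXY
        have hvec : (2 * c * a + B * b - E * b) •
            (Af ((2 * c * a + B * b + E * b) / (2 * c * a + B * b - E * b)) • u
              + Bf ((2 * c * a + B * b + E * b) / (2 * c * a + B * b - E * b)) • w)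
            = (4 * c * E) • (a • u + b • w) := by
          calc (2 * c * a + B * b - E * b) •
              (Af ((2 * c * a + B * b + E * b) / (2 * c * a + B * b - E * b)) • u
                + Bf ((2 * c * a + B * b + E * b) / (2 * c * a + B * b - E * b)) • w)
              = (4 * c * E * a) • u + (4 * c * E * b) • w := by
                rw [smul_add, smul_smul, smul_smul, haa, hbb]
            _ = (4 * c * E) • (a • u + b • w) := by
                rw [smul_add, smul_smul, smul_smul]
        have hFeq : Fline (Af ((2 * c * a + B * b + E * b) / (2 * c * a + B * b - E * b)) • u
              + Bf ((2 * c * a + B * b + E * b) / (2 * c * a + B * b - E * b)) • w)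
            = Fline ((4 * c * E) • (a • u + b • w)) := by
          rw [← hvec, hFl_smul _ hY0]
        rw [hFeq, hFl_smul _ h4cE]
    · rintro ⟨t, htT, rfl⟩
      simp only [hΦdef]
      refine ⟨Af t • u + Bf t • w, ?_, Submodule.mem_span_pair.mpr ⟨Af t, Bf t, rfl⟩, ?_, rfl⟩
      · intro hzero
        obtain ⟨hA0, hB0⟩ := hli _ _ hzero
        have h1 := hYt t
        rw [hA0, hB0] at h1
        apply h4cE
        linear_combination -h1
      · rw [hqhalf]
        apply (hstep (Af t) (Bf t)).mpr
        rw [hXt t, hYt t, mul_pow (4 * c * E) t (m + 1)]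
        simp only [hTdef, Set.mem_setOf_eq] at htT
        linear_combination (((4 * c * E) ^ (m + 1)) ^ 2) * htT
  have hinj : Set.InjOn Φ T := by
    intro t ht t' ht' hEq
    simp only [hΦdef] at hEq
    have hmem : Af t • u + Bf t • w ∈ Fline (Af t' • u + Bf t' • w) := by
      rw [← hEq]
      exact ⟨1, (one_smul F _).symm⟩
    obtain ⟨lam, hlam⟩ := hmem
    have h0 : (Af t - lam * Af t') • u + (Bf t - lam * Bf t') • w = 0 := by
      have hsub : Af t • u + Bf t • w - lam • (Af t' • u + Bf t' • w) = 0 :=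
        sub_eq_zero.mpr hlam
      calc (Af t - lam * Af t') • u + (Bf t - lam * Bf t') • w
          = Af t • u + Bf t • w - lam • (Af t' • u + Bf t' • w) := by
            rw [smul_add, smul_smul, smul_smul, sub_smul, sub_smul]
            abel
        _ = 0 := hsub
    obtain ⟨hA, hB'⟩ := hli _ _ h0
    have hA' : Af t = lam * Af t' := by linear_combination hA
    have hB'' : Bf t = lam * Bf t' := by linear_combination hB'
    have hlam1 : lam = 1 := by
      have e1 := hYt t
      have e2 := hYt t'
      have h1 : lam * (4 * c * E) = 1 * (4 * c * E) := by
        linear_combination e1 - lam * e2 - (2 * c) * hA' - (B - E) * hB''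
      exact mul_right_cancel₀ h4cE h1
    rw [hlam1] at hA' hB''
    have e3 := hXt t
    have e4 := hXt t'
    have h5 : t * (4 * c * E) = t' * (4 * c * E) := by
      linear_combination -e3 + e4 + (2 * c) * hA' + (B + E) * hB''
    exact mul_right_cancel₀ h4cE h5
  rw [hSet, Set.ncard_image_of_injOn hinj]
  exact hTcard
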